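/- Let p be an odd prime, n a positive integer, and a an element of ℤ_p (or ℚ_p) with p ∤ a. Then a is a p^n-th power in ℚ_p if and only if p^{n+1} divides a^{p-1} - 1. -/

import Mathlib

open PadicInt

/-- second-order binomial expansion -/
lemma bin3 {R : Type*} [CommRing R] (t : R) : ∀ m : ℕ,
    ∃ E : R, (1 + t) ^ m = 1 + (m : R) * t + (m.choose 2 : R) * t ^ 2 + t ^ 3 * E := by
  intro m
  induction m with
  | zero => exact ⟨0, by simp⟩
  | succ m ih =>
    obtain ⟨E, hE⟩ := ih
    refine ⟨E + (m.choose 2 : R) + t * E, ?_⟩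
    rw [pow_succ, hE, Nat.choose_succ_succ m 1, Nat.choose_one_right]
    push_cast
    ring

lemma choose_two_odd {p : ℕ} (hp : Odd p) : ∃ h : ℕ, p.choose 2 = p * h := by
  obtain ⟨k, rfl⟩ := hp
  refine ⟨k, ?_⟩
  rw [Nat.choose_two_right]
  have h1 : 2 * k + 1 - 1 = 2 * k := rfl
  rw [h1, show (2 * k + 1) * (2 * k) = ((2 * k + 1) * k) * 2 by ring,
    Nat.mul_div_cancel _ (by norm_num)]

variable {p : ℕ} [Fact p.Prime]

lemma unit_of_one_add {z : ℤ_[p]} (hz : (p : ℤ_[p]) ∣ z) : IsUnit (1 + z) := by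
  rw [PadicInt.isUnit_iff]
  have hzlt : ‖z‖ < 1 := (PadicInt.norm_lt_one_iff_dvd z).mpr hz
  refine le_antisymm (PadicInt.norm_le_one _) ?_
  by_contra hlt
  push_neg at hlt
  have : (1 : ℝ) = ‖(1 + z) + (-z)‖ := by norm_num
  have hle := PadicInt.nonarchimedean (1 + z) (-z)
  rw [norm_neg] at hle
  have : (1:ℝ) ≤ max ‖1 + z‖ ‖z‖ := le_trans (le_of_eq this) hle
  rcases le_max_iff.mp this with h | h
  · exact absurd h (not_le.mpr hlt)
  · exact absurd h (not_le.mpr hzlt)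

lemma dvd_iff_toZMod_eq_zero (z : ℤ_[p]) :
    (p : ℤ_[p]) ∣ z ↔ PadicInt.toZMod z = 0 := by
  rw [← RingHom.mem_ker, PadicInt.ker_toZMod, PadicInt.maximalIdeal_eq_span_p,
    Ideal.mem_span_singleton]

/-- master factorization: for `p ∣ t`, `(1+t)^p - 1 = t * p * (1 + t*V)`. -/
lemma master (hp : Odd p) {t : ℤ_[p]} (ht : (p : ℤ_[p]) ∣ t) :
    ∃ V : ℤ_[p], (1 + t) ^ p - 1 = t * p * (1 + t * V) := by
  obtain ⟨E, hE⟩ := bin3 t p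
  obtain ⟨h, hch⟩ := choose_two_odd hp
  obtain ⟨s, hs⟩ := ht
  refine ⟨(h : ℤ_[p]) + s * E, ?_⟩
  rw [hE, hch]
  push_cast
  linear_combination (t ^ 2 * E) * hs

lemma lemD (hp : Odd p) {w : ℤ_[p]} (hw : (p : ℤ_[p]) ∣ w - 1) :
    ∀ n : ℕ, (p : ℤ_[p]) ^ (n + 1) ∣ w ^ p ^ n - 1 := by
  intro n
  induction n with
  | zero => simpa using hw
  | succ n ih =>
    set t := w ^ p ^ n - 1 with hT
    have hpt : (p : ℤ_[p]) ∣ t := dvd_trans (dvd_pow_self _ (Nat.succ_ne_zero n)) ih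
    obtain ⟨V, hV⟩ := master hp hpt
    have h1t : 1 + t = w ^ p ^ n := by rw [hT]; ring
    have : w ^ p ^ (n + 1) - 1 = t * p * (1 + t * V) := by
      rw [← hV, h1t, ← pow_mul, ← pow_succ]
    rw [this, pow_succ]
    exact (mul_dvd_mul ih dvd_rfl).mul_right _

lemma proot (hp : Odd p) {k : ℕ} (hk : 1 ≤ k) {x : ℤ_[p]}
    (hx : (p : ℤ_[p]) ^ (k + 1) ∣ x - 1) :
    ∃ z : ℤ_[p], z ^ p = x ∧ (p : ℤ_[p]) ^ k ∣ z - 1 := by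
  have hp1 : 1 < p := (Fact.out : p.Prime).one_lt
  have hpR : (1 : ℝ) < (p : ℝ) := by exact_mod_cast hp1
  have hpne : (p : ℤ_[p]) ≠ 0 := Nat.cast_ne_zero.mpr (by omega)
  obtain ⟨u, hu⟩ := hx
  rw [pow_succ] at hu
  set y₀ : ℤ_[p] := 1 + (p : ℤ_[p]) ^ k * u with hy₀
  have hpk : (p : ℤ_[p]) ∣ (p : ℤ_[p]) ^ k * u :=
    (dvd_pow_self (p : ℤ_[p]) (by omega)).mul_right u
  obtain ⟨V, hV⟩ := master hp hpk
  have hyunit : IsUnit y₀ := unit_of_one_add hpk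
  have hpow : (p : ℤ_[p]) ^ (2 * k + 1) = (p : ℤ_[p]) ^ k * (p : ℤ_[p]) ^ k * p := by
    rw [← pow_add, ← pow_succ, two_mul]
  have hkey : y₀ ^ p - x = (p : ℤ_[p]) ^ (2 * k + 1) * (u ^ 2 * V) := by
    rw [hpow]
    linear_combination hV - hu
  set F : Polynomial ℤ_[p] := Polynomial.X ^ p - Polynomial.C x with hF
  have hFeval : ∀ z : ℤ_[p], F.eval z = z ^ p - x := by intro z; simp [hF]
  have hFderiveval : ∀ z : ℤ_[p], F.derivative.eval z = (p : ℤ_[p]) * z ^ (p - 1) := by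
    intro z
    rw [hF, Polynomial.derivative_sub, Polynomial.derivative_C, Polynomial.derivative_X_pow]
    simp
  have hnd : ‖F.derivative.eval y₀‖ = (p : ℝ)⁻¹ := by
    rw [hFderiveval, norm_mul, PadicInt.norm_p,
      PadicInt.isUnit_iff.mp (hyunit.pow _), mul_one]
  have hinv2 : ((p : ℝ)⁻¹) ^ 2 = (p : ℝ) ^ (-2 : ℤ) := by
    rw [inv_pow, ← zpow_natCast, ← zpow_neg]
    norm_num
  have hlt : ‖F.eval y₀‖ < ‖F.derivative.eval y₀‖ ^ 2 := by
    rw [hFeval, hnd, hkey, hinv2]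
    calc ‖(p : ℤ_[p]) ^ (2 * k + 1) * (u ^ 2 * V)‖
        ≤ ‖(p : ℤ_[p]) ^ (2 * k + 1)‖ := by
          rw [norm_mul]
          exact mul_le_of_le_one_right (norm_nonneg _) (PadicInt.norm_le_one _)
      _ = (p : ℝ) ^ (-(2 * k + 1 : ℕ) : ℤ) := PadicInt.norm_p_pow _
      _ < (p : ℝ) ^ (-2 : ℤ) := by
          apply zpow_lt_zpow_right₀ hpR
          push_cast
          omega
  obtain ⟨z, hz, -, -, -⟩ := hensels_lemma hlt
  rw [Polynomial.coe_aeval_eq_eval, hFeval] at hz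
  have hzp : z ^ p = x := sub_eq_zero.mp hz
  have hx1 : (p : ℤ_[p]) ∣ x - 1 := by
    have : (p : ℤ_[p]) ∣ (p : ℤ_[p]) ^ k * p := (dvd_pow_self (p : ℤ_[p]) (by omega : k ≠ 0)).mul_right (p : ℤ_[p])
    exact hu ▸ this.mul_right u
  have hz1 : (p : ℤ_[p]) ∣ z - 1 := by
    rw [dvd_iff_toZMod_eq_zero] at hx1 ⊢
    have h1 : PadicInt.toZMod x = 1 := by
      rwa [map_sub, map_one, sub_eq_zero] at hx1
    have h2 : PadicInt.toZMod z ^ p = 1 := by rw [← map_pow, hzp, h1]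
    rw [map_sub, map_one, sub_eq_zero, ← ZMod.pow_card (PadicInt.toZMod z), h2]
  obtain ⟨V₂, hV₂⟩ := master hp hz1
  have h1z : (1 : ℤ_[p]) + (z - 1) = z := by ring
  rw [h1z] at hV₂
  obtain ⟨W, hW⟩ := unit_of_one_add (hz1.mul_right V₂)
  have hdvd : (p : ℤ_[p]) ^ (k + 1) ∣ (z - 1) * p * (1 + (z - 1) * V₂) := by
    rw [← hV₂, hzp]
    exact ⟨u, by linear_combination hu⟩
  have hdvd2 : (p : ℤ_[p]) ^ (k + 1) ∣ (z - 1) * p := by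
    have h3 := hdvd.mul_right (↑W⁻¹ : ℤ_[p])
    rwa [mul_assoc, ← hW, Units.mul_inv, mul_one] at h3
  refine ⟨z, hzp, ?_⟩
  rw [pow_succ] at hdvd2
  exact (mul_dvd_mul_iff_right hpne).mp hdvd2

lemma lemB (hp : Odd p) : ∀ n : ℕ, ∀ x : ℤ_[p], (p : ℤ_[p]) ^ (n + 1) ∣ x - 1 →
    ∃ y : ℤ_[p], y ^ p ^ n = x := by
  intro n
  induction n with
  | zero => exact fun x _ => ⟨x, by rw [pow_zero, pow_one]⟩
  | succ n ih =>
    intro x hx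
    obtain ⟨z, hzp, hz1⟩ := proot hp (by omega : 1 ≤ n + 1) hx
    obtain ⟨y, hy⟩ := ih z hz1
    exact ⟨y, by rw [pow_succ, pow_mul, hy, hzp]⟩

lemma exists_f {p : ℕ} (hp2 : 2 ≤ p) : ∀ n : ℕ, ∃ f : ℕ, p ^ n = f * (p - 1) + 1 := by
  intro n
  obtain ⟨q, rfl⟩ : ∃ q, p = q + 1 := ⟨p - 1, by omega⟩
  induction n with
  | zero => exact ⟨0, by simp⟩
  | succ n ih =>
    obtain ⟨f, hf⟩ := ih
    refine ⟨(q + 1) * f + 1, ?_⟩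
    rw [pow_succ, hf]
    simp only [Nat.add_sub_cancel]
    ring


/-- Lemma 3.2 (I): for an odd prime `p`, a `p`-adic integer `a` not divisible by `p`,
and `n ≥ 1`, `a` is a `p^n`-th power in `ℚ_p` iff `p^(n+1) ∣ a^(p-1) - 1`. -/
theorem stmt_0 (p : ℕ) [Fact p.Prime] (hp : Odd p) (n : ℕ) (hn : 0 < n)
    (a : ℤ_[p]) (ha : ¬ (p : ℤ_[p]) ∣ a) :
    (∃ r : ℚ_[p], r ^ p ^ n = (a : ℚ_[p])) ↔ (p : ℤ_[p]) ^ (n + 1) ∣ a ^ (p - 1) - 1 := by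
  have hprime : p.Prime := Fact.out
  have hp2 : 2 ≤ p := hprime.two_le
  constructor
  · rintro ⟨r, hr⟩
    have hrle : ‖r‖ ≤ 1 := by
      by_contra hgt
      push_neg at hgt
      have h1 : (1 : ℝ) < ‖r‖ ^ p ^ n := one_lt_pow₀ hgt (pow_ne_zero n hprime.ne_zero)
      rw [← _root_.norm_pow, hr, ← PadicInt.norm_def] at h1
      exact absurd (PadicInt.norm_le_one a) (not_le.mpr h1)
    set s : ℤ_[p] := ⟨r, hrle⟩ with hs
    have hspow : s ^ p ^ n = a := by
      apply Subtype.ext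
      rw [PadicInt.coe_pow]
      exact hr
    have hpds : ¬ (p : ℤ_[p]) ∣ s := by
      intro hd
      exact ha (hspow ▸ hd.trans (dvd_pow_self s (pow_ne_zero n hprime.ne_zero)))
    have hsz : PadicInt.toZMod s ≠ 0 := by
      intro h
      exact hpds ((dvd_iff_toZMod_eq_zero s).mpr h)
    have hfermat : (p : ℤ_[p]) ∣ s ^ (p - 1) - 1 := by
      rw [dvd_iff_toZMod_eq_zero, map_sub, map_pow, map_one,
        ZMod.pow_card_sub_one_eq_one hsz, sub_self]
    have hD := lemD hp hfermat n
    rwa [← pow_mul, mul_comm (p - 1) (p ^ n), pow_mul, hspow] at hD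
  · intro hdvd
    obtain ⟨c, hc⟩ := lemB hp n (a ^ (p - 1)) hdvd
    have haQ : (a : ℚ_[p]) ≠ 0 := by
      intro h0
      have h0' : a = 0 := Subtype.ext (by simpa using h0)
      rw [h0'] at ha
      exact ha (dvd_zero _)
    have hcQ : (c : ℚ_[p]) ^ p ^ n = (a : ℚ_[p]) ^ (p - 1) := by
      rw [← PadicInt.coe_pow, ← PadicInt.coe_pow, hc]
    obtain ⟨f, hf⟩ := exists_f hp2 n
    have hX : ((a : ℚ_[p]) ^ (p - 1)) ^ f ≠ 0 := pow_ne_zero _ (pow_ne_zero _ haQ)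
    have hAe : (a : ℚ_[p]) ^ p ^ n = ((a : ℚ_[p]) ^ (p - 1)) ^ f * (a : ℚ_[p]) := by
      rw [← pow_mul, ← pow_succ]
      congr 1
      rw [hf]
      ring
    refine ⟨(a : ℚ_[p]) * ((c : ℚ_[p]) ^ f)⁻¹, ?_⟩
    calc ((a : ℚ_[p]) * ((c : ℚ_[p]) ^ f)⁻¹) ^ p ^ n
        = (a : ℚ_[p]) ^ p ^ n * (((c : ℚ_[p]) ^ p ^ n) ^ f)⁻¹ := by
          rw [mul_pow, inv_pow, ← pow_mul, ← pow_mul, mul_comm f]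
      _ = ((a : ℚ_[p]) ^ (p - 1)) ^ f * (a : ℚ_[p]) * (((a : ℚ_[p]) ^ (p - 1)) ^ f)⁻¹ := by
          rw [hcQ, hAe]
      _ = (a : ℚ_[p]) := by
          rw [mul_comm (((a : ℚ_[p]) ^ (p - 1)) ^ f) ((a : ℚ_[p])),
            mul_inv_cancel_right₀ hX]
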